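/- Let α ∈ (0,1), let g : ℝ^d → ℝ^d satisfy a global Lipschitz condition with constant L > 0, let T > 0, and let f, h : [0,T] → ℝ^d be continuous, with x_f, x_h the unique continuous solutions of the corresponding singular Volterra integral equations with kernel (1/Γ(α))(t−s)^{α−1} and forcing terms f and h. Then for every t ∈ [0,T], ‖x_f(t) − x_h(t)‖ ≤ (sup_{s∈[0,t]} ‖f(s) − h(s)‖) · E_α(L t^α). -/

import Mathlib

open Real MeasureTheory Set

lemma gamma_slope {y a : ℝ} (hy : 2 ≤ y) (ha : 0 < a) :
    Real.Gamma y * (y - 1) ^ a ≤ Real.Gamma (y + a) := by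
  have h1 : (0:ℝ) < y - 1 := by linarith
  have hG1 : 0 < Real.Gamma (y - 1) := Real.Gamma_pos_of_pos h1
  have hGy : 0 < Real.Gamma y := Real.Gamma_pos_of_pos (by linarith)
  have hGya : 0 < Real.Gamma (y + a) := Real.Gamma_pos_of_pos (by linarith)
  have hrec : Real.Gamma y = (y - 1) * Real.Gamma (y - 1) := by
    have := Real.Gamma_add_one (s := y - 1) h1.ne'
    rwa [sub_add_cancel] at this
  have hslope := Real.convexOn_log_Gamma.slope_mono_adjacent
      (x := y - 1) (y := y) (z := y + a)
      (by simpa using h1) (by simp; linarith) (by linarith) (by linarith)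
  simp only [Function.comp] at hslope
  have e1 : Real.log (Real.Gamma y) - Real.log (Real.Gamma (y - 1)) = Real.log (y - 1) := by
    rw [hrec, Real.log_mul h1.ne' hG1.ne']; ring
  have key : Real.log (Real.Gamma y) + a * Real.log (y - 1) ≤ Real.log (Real.Gamma (y + a)) := by
    have hd : y - (y - 1) = 1 := by ring
    rw [hd, div_one, e1] at hslope
    have h2 : y + a - y = a := by ring
    rw [h2] at hslope
    have h3 := (le_div_iff₀ ha).mp hslope
    nlinarith [h3]
  calc Real.Gamma y * (y - 1) ^ a
      = Real.exp (Real.log (Real.Gamma y) + a * Real.log (y - 1)) := by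
        rw [Real.exp_add, Real.exp_log hGy, Real.rpow_def_of_pos h1, mul_comm (Real.log (y-1)) a]
    _ ≤ Real.exp (Real.log (Real.Gamma (y + a))) := Real.exp_le_exp.mpr key
    _ = Real.Gamma (y + a) := Real.exp_log hGya

lemma summable_mittag {α : ℝ} (hα : 0 < α) {x : ℝ} (hx : 0 ≤ x) :
    Summable (fun k : ℕ => x ^ k / Real.Gamma (α * k + 1)) := by
  apply summable_of_ratio_norm_eventually_le (r := 1/2) (by norm_num)
  have htends : Filter.Tendsto (fun k : ℕ => α * k) Filter.atTop Filter.atTop :=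
    (tendsto_natCast_atTop_atTop (R := ℝ)).const_mul_atTop hα
  filter_upwards [htends.eventually_ge_atTop (max 1 ((2*x+1) ^ α⁻¹))] with k hk
  have hk1 : (1:ℝ) ≤ α * k := le_trans (le_max_left _ _) hk
  have hk2 : (2*x+1) ^ α⁻¹ ≤ α * k := le_trans (le_max_right _ _) hk
  set y : ℝ := α * k + 1 with hy
  have hy2 : 2 ≤ y := by simp only [hy]; linarith
  have hGy : 0 < Real.Gamma y := Real.Gamma_pos_of_pos (by linarith)
  have hGya : 0 < Real.Gamma (y + α) := Real.Gamma_pos_of_pos (by linarith)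
  have hpow : (2*x+1) ≤ (α * k) ^ α := by
    have h1 : ((2*x+1) ^ α⁻¹) ^ α ≤ (α * k) ^ α :=
      Real.rpow_le_rpow (Real.rpow_nonneg (by linarith) _) hk2 hα.le
    rwa [← Real.rpow_mul (by linarith), inv_mul_cancel₀ hα.ne', Real.rpow_one] at h1
  have hGgrow : (2*x+1) * Real.Gamma y ≤ Real.Gamma (y + α) := by
    have := gamma_slope hy2 hα
    have hy1 : y - 1 = α * k := by simp [hy]
    rw [hy1] at this
    nlinarith [hGy, hpow]
  have hGnext : Real.Gamma (α * (k+1 : ℕ) + 1) = Real.Gamma (y + α) := by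
    push_cast
    rw [show α * ((k:ℝ) + 1) + 1 = y + α by simp [hy]; ring]
  rw [Real.norm_eq_abs, Real.norm_eq_abs, abs_div, abs_div,
    abs_of_nonneg (pow_nonneg hx _), abs_of_nonneg (pow_nonneg hx _),
    abs_of_pos (by rw [hGnext]; exact hGya), abs_of_pos hGy, hGnext]
  rw [show (1:ℝ)/2 * (x^k/Real.Gamma y) = x^k/(2*Real.Gamma y) by ring,
    div_le_div_iff₀ hGya (by positivity)]
  nlinarith [pow_nonneg hx k, hGy.le, mul_le_mul_of_nonneg_left hGgrow (pow_nonneg hx k),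
    pow_succ x k]

lemma betaReal {u v : ℝ} (hu : 0 < u) (hv : 0 < v) {a : ℝ} (ha : 0 < a) :
    ∫ x in (0:ℝ)..a, x ^ (u - 1) * (a - x) ^ (v - 1) =
      Real.Gamma u * Real.Gamma v / Real.Gamma (u + v) * a ^ (u + v - 1) := by
  have hΓ : Real.Gamma (u + v) ≠ 0 := (Real.Gamma_pos_of_pos (by linarith)).ne'
  rw [← Complex.ofReal_inj]
  have h1 : ((∫ x in (0:ℝ)..a, x ^ (u-1) * (a-x) ^ (v-1) : ℝ) : ℂ)
      = ∫ x in (0:ℝ)..a, (x:ℂ) ^ ((u:ℂ) - 1) * ((a:ℂ) - x) ^ ((v:ℂ) - 1) := by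
    rw [← intervalIntegral.integral_ofReal]
    refine intervalIntegral.integral_congr fun x hx => ?_
    rw [uIcc_of_le ha.le] at hx
    rw [Complex.ofReal_mul, Complex.ofReal_cpow hx.1 (u-1),
      Complex.ofReal_cpow (by linarith [hx.2] : (0:ℝ) ≤ a - x) (v-1)]
    push_cast
    ring
  rw [h1, Complex.betaIntegral_scaled (u:ℂ) (v:ℂ) ha]
  have h3 := Complex.Gamma_mul_Gamma_eq_betaIntegral
    (s := (u:ℂ)) (t := (v:ℂ)) (by simpa using hu) (by simpa using hv)
  have hΓC : Complex.Gamma ((u:ℂ) + (v:ℂ)) ≠ 0 := by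
    rw [← Complex.ofReal_add, Complex.Gamma_ofReal]
    exact_mod_cast hΓ
  have hB : Complex.betaIntegral u v
      = Complex.Gamma u * Complex.Gamma v / Complex.Gamma ((u:ℂ) + v) := by
    field_simp at h3 ⊢
    rw [h3]
  rw [hB]
  rw [Complex.ofReal_mul, Complex.ofReal_div, Complex.ofReal_mul,
    ← Complex.Gamma_ofReal, ← Complex.Gamma_ofReal, ← Complex.Gamma_ofReal,
    Complex.ofReal_cpow ha.le]
  push_cast
  ring

lemma keyInt {α β τ : ℝ} (hα : 0 < α) (hβ : 0 ≤ β) (hτ : 0 ≤ τ) :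
    ∫ s in (0:ℝ)..τ, (τ - s) ^ (α - 1) * s ^ β =
      Real.Gamma α * Real.Gamma (β + 1) / Real.Gamma (α + β + 1) * τ ^ (α + β) := by
  rcases eq_or_lt_of_le hτ with rfl | hτ'
  · rw [intervalIntegral.integral_same, Real.zero_rpow (by positivity : α + β ≠ 0), mul_zero]
  · have hb := betaReal (u := β + 1) (v := α) (by linarith) hα hτ'
    rw [show β + 1 - 1 = β by ring] at hb
    rw [show (∫ s in (0:ℝ)..τ, (τ - s) ^ (α - 1) * s ^ β)
        = ∫ s in (0:ℝ)..τ, s ^ β * (τ - s) ^ (α - 1) from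
      intervalIntegral.integral_congr fun x _ => mul_comm _ _, hb,
      show β + 1 + α = α + β + 1 by ring]
    rw [show α + β + 1 - 1 = α + β by ring]
    ring

lemma kernelInt {α : ℝ} (hα : 0 < α) (τ : ℝ) :
    IntervalIntegrable (fun s => (τ - s) ^ (α - 1)) volume 0 τ := by
  have h := (intervalIntegral.intervalIntegrable_rpow' (a := 0) (b := τ)
    (by linarith : (-1:ℝ) < α - 1)).comp_sub_left τ
  simpa using h.symm

lemma smulInt {E : Type*} [NormedAddCommGroup E] [NormedSpace ℝ E]
    [SecondCountableTopology E]
    {f : ℝ → ℝ} {g : ℝ → E} {a b : ℝ} (hab : a ≤ b)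
    (hf : IntervalIntegrable f volume a b) (hg : ContinuousOn g (Icc a b)) :
    IntervalIntegrable (fun s => f s • g s) volume a b := by
  rw [intervalIntegrable_iff_integrableOn_Ioc_of_le hab] at hf ⊢
  have h1 : IntegrableOn f (Icc a b) := (integrableOn_Icc_iff_integrableOn_Ioc (by simp)).mpr hf
  exact (h1.smul_continuousOn hg isCompact_Icc).mono_set Ioc_subset_Icc_self

/-- The Mittag-Leffler function `E_α(t) = ∑_{k=0}^∞ t^k / Γ(αk+1)`. -/
noncomputable def mittagLeffler (α t : ℝ) : ℝ :=
  ∑' k : ℕ, t ^ k / Real.Gamma (α * k + 1)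

theorem stmt5 {d : ℕ} (α : ℝ) (hα : α ∈ Set.Ioo (0:ℝ) 1)
    (g : EuclideanSpace ℝ (Fin d) → EuclideanSpace ℝ (Fin d))
    (L : ℝ) (hL : 0 < L)
    (hg : ∀ x y : EuclideanSpace ℝ (Fin d), ‖g x - g y‖ ≤ L * ‖x - y‖)
    (T : ℝ) (hT : 0 < T)
    (f h : ℝ → EuclideanSpace ℝ (Fin d))
    (hf : ContinuousOn f (Set.Icc 0 T)) (hh : ContinuousOn h (Set.Icc 0 T))
    (xf xh : ℝ → EuclideanSpace ℝ (Fin d))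
    (hxf : ContinuousOn xf (Set.Icc 0 T))
    (hxh : ContinuousOn xh (Set.Icc 0 T))
    (hxfeq : ∀ t ∈ Set.Icc (0:ℝ) T,
      xf t = f t + (1 / Real.Gamma α) •
        ∫ s in (0:ℝ)..t, ((t - s) ^ (α - 1)) • g (xf s))
    (hxheq : ∀ t ∈ Set.Icc (0:ℝ) T,
      xh t = h t + (1 / Real.Gamma α) •
        ∫ s in (0:ℝ)..t, ((t - s) ^ (α - 1)) • g (xh s)) :
    ∀ t ∈ Set.Icc (0:ℝ) T,
      ‖xf t - xh t‖ ≤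
        (⨆ s : Set.Icc (0:ℝ) t, ‖f s.1 - h s.1‖) * mittagLeffler α (L * t ^ α) := by
  obtain ⟨hα0, hα1⟩ := hα
  intro t ht
  obtain ⟨ht0, htT⟩ := ht
  set M := (⨆ s : Set.Icc (0:ℝ) t, ‖f s.1 - h s.1‖) with hM
  set φ : ℝ → ℝ := fun s => ‖xf s - xh s‖ with hφ
  have hΓα : 0 < Real.Gamma α := Real.Gamma_pos_of_pos hα0
  have hsub : Icc (0:ℝ) t ⊆ Icc 0 T := Icc_subset_Icc le_rfl htT
  have hφcont : ContinuousOn φ (Icc 0 t) := ((hxf.mono hsub).sub (hxh.mono hsub)).norm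
  obtain ⟨C0, hC0⟩ :=
    isCompact_Icc.exists_bound_of_continuousOn ((hxf.mono hsub).sub (hxh.mono hsub))
  set C := max C0 0 with hCdef
  have hC : ∀ s ∈ Icc (0:ℝ) t, φ s ≤ C := fun s hs => (hC0 s hs).trans (le_max_left _ _)
  have hCnn : (0:ℝ) ≤ C := le_max_right _ _
  have hMb : ∀ s ∈ Icc (0:ℝ) t, ‖f s - h s‖ ≤ M := by
    intro s hs
    have hbdd : BddAbove (Set.range fun s : Icc (0:ℝ) t => ‖f s.1 - h s.1‖) := by
      rw [show (fun s : Icc (0:ℝ) t => ‖f s.1 - h s.1‖)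
          = ((fun x => ‖f x - h x‖) ∘ Subtype.val) from rfl,
        Set.range_comp, Subtype.range_val]
      exact (isCompact_Icc.image_of_continuousOn
        (((hf.mono hsub).sub (hh.mono hsub)).norm)).bddAbove
    exact le_ciSup hbdd ⟨s, hs⟩
  have hMnn : (0:ℝ) ≤ M := le_trans (norm_nonneg _) (hMb 0 (left_mem_Icc.mpr ht0))
  have hgcont : Continuous g := by
    have : LipschitzWith (Real.toNNReal L) g := by
      apply LipschitzWith.of_dist_le_mul
      intro x y
      rw [dist_eq_norm, dist_eq_norm]
      exact le_trans (hg x y) (by rw [Real.coe_toNNReal L hL.le])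
    exact this.continuous
  -- step 1: basic integral inequality
  have step1 : ∀ τ ∈ Icc (0:ℝ) t,
      φ τ ≤ M + (L / Real.Gamma α) * ∫ s in (0:ℝ)..τ, (τ - s) ^ (α - 1) * φ s := by
    intro τ hτ
    have hτ0 : (0:ℝ) ≤ τ := hτ.1
    have hτT : τ ∈ Icc (0:ℝ) T := hsub hτ
    have hIccτ : Icc (0:ℝ) τ ⊆ Icc 0 t := Icc_subset_Icc le_rfl hτ.2
    have hIccτT : Icc (0:ℝ) τ ⊆ Icc 0 T := hIccτ.trans hsub
    have hK := kernelInt hα0 τ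
    have hKnn : ∀ s ∈ Icc (0:ℝ) τ, 0 ≤ (τ - s) ^ (α - 1) :=
      fun s hs => Real.rpow_nonneg (by linarith [hs.2]) _
    have hIf : IntervalIntegrable (fun s => (τ - s) ^ (α - 1) • g (xf s)) volume 0 τ :=
      smulInt hτ0 hK (hgcont.comp_continuousOn (hxf.mono hIccτT))
    have hIh : IntervalIntegrable (fun s => (τ - s) ^ (α - 1) • g (xh s)) volume 0 τ :=
      smulInt hτ0 hK (hgcont.comp_continuousOn (hxh.mono hIccτT))
    have heq : xf τ - xh τ = (f τ - h τ) + (1 / Real.Gamma α) •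
        ∫ s in (0:ℝ)..τ, (τ - s) ^ (α - 1) • (g (xf s) - g (xh s)) := by
      rw [hxfeq τ hτT, hxheq τ hτT]
      have hsplit : (∫ s in (0:ℝ)..τ, (τ - s) ^ (α - 1) • (g (xf s) - g (xh s)))
          = (∫ s in (0:ℝ)..τ, (τ - s) ^ (α - 1) • g (xf s))
            - ∫ s in (0:ℝ)..τ, (τ - s) ^ (α - 1) • g (xh s) := by
        rw [← intervalIntegral.integral_sub hIf hIh]
        exact intervalIntegral.integral_congr fun s _ => smul_sub _ _ _
      rw [hsplit, smul_sub]
      abel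
    have hb1 : φ τ ≤ ‖f τ - h τ‖ + (1 / Real.Gamma α) *
        ‖∫ s in (0:ℝ)..τ, (τ - s) ^ (α - 1) • (g (xf s) - g (xh s))‖ := by
      rw [hφ]
      simp only
      rw [heq]
      refine (norm_add_le _ _).trans ?_
      rw [norm_smul, Real.norm_eq_abs, abs_of_pos (by positivity)]
    have hb2 : ‖∫ s in (0:ℝ)..τ, (τ - s) ^ (α - 1) • (g (xf s) - g (xh s))‖
        ≤ ∫ s in (0:ℝ)..τ, (τ - s) ^ (α - 1) * (L * φ s) := by
      refine (intervalIntegral.norm_integral_le_integral_norm hτ0).trans ?_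
      have hId : IntervalIntegrable
          (fun s => (τ - s) ^ (α - 1) • (g (xf s) - g (xh s))) volume 0 τ :=
        smulInt hτ0 hK ((hgcont.comp_continuousOn (hxf.mono hIccτT)).sub
          (hgcont.comp_continuousOn (hxh.mono hIccτT)))
      have hIr : IntervalIntegrable (fun s => (τ - s) ^ (α - 1) * (L * φ s)) volume 0 τ := by
        refine hK.mul_continuousOn ?_
        rw [uIcc_of_le hτ0]
        exact (continuous_const.continuousOn.mul (hφcont.mono hIccτ))
      refine intervalIntegral.integral_mono_on hτ0 hId.norm hIr ?_
      · intro s hs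
        rw [norm_smul, Real.norm_eq_abs, abs_of_nonneg (hKnn s hs)]
        exact mul_le_mul_of_nonneg_left (hg _ _) (hKnn s hs)
    have hconst : (∫ s in (0:ℝ)..τ, (τ - s) ^ (α - 1) * (L * φ s))
        = L * ∫ s in (0:ℝ)..τ, (τ - s) ^ (α - 1) * φ s := by
      rw [← intervalIntegral.integral_const_mul]
      exact intervalIntegral.integral_congr fun s _ => by ring
    calc φ τ ≤ ‖f τ - h τ‖ + (1 / Real.Gamma α) *
        ‖∫ s in (0:ℝ)..τ, (τ - s) ^ (α - 1) • (g (xf s) - g (xh s))‖ := hb1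
      _ ≤ M + (1 / Real.Gamma α) * ∫ s in (0:ℝ)..τ, (τ - s) ^ (α - 1) * (L * φ s) :=
          add_le_add (hMb τ hτ) (mul_le_mul_of_nonneg_left hb2 (by positivity))
      _ = M + (L / Real.Gamma α) * ∫ s in (0:ℝ)..τ, (τ - s) ^ (α - 1) * φ s := by
          rw [hconst]; ring
  have main : ∀ n : ℕ, ∀ τ ∈ Icc (0:ℝ) t,
      φ τ ≤ M * (∑ k ∈ Finset.range n, L ^ k * τ ^ (α * k) / Real.Gamma (α * k + 1))
        + C * (L ^ n * τ ^ (α * n) / Real.Gamma (α * n + 1)) := by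
    intro n
    induction n with
    | zero =>
      intro τ hτ
      simpa [Real.Gamma_one] using hC τ hτ
    | succ n ih =>
      intro τ hτ
      have hτ0 : (0:ℝ) ≤ τ := hτ.1
      have hIccτ : Icc (0:ℝ) τ ⊆ Icc 0 t := Icc_subset_Icc le_rfl hτ.2
      have hK := kernelInt hα0 τ
      have hKnn : ∀ s ∈ Icc (0:ℝ) τ, 0 ≤ (τ - s) ^ (α - 1) :=
        fun s hs => Real.rpow_nonneg (by linarith [hs.2]) _
      set ψ : ℝ → ℝ := fun s =>
        M * (∑ k ∈ Finset.range n, L ^ k * s ^ (α * k) / Real.Gamma (α * k + 1))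
          + C * (L ^ n * s ^ (α * n) / Real.Gamma (α * n + 1)) with hψdef
      have hψcont : Continuous ψ := by
        apply Continuous.add
        · exact continuous_const.mul (continuous_finset_sum _ fun k _ =>
            ((continuous_const.mul (Real.continuous_rpow_const (by positivity))).div_const _))
        · exact continuous_const.mul ((continuous_const.mul
            (Real.continuous_rpow_const (by positivity))).div_const _)
      have hIφ : IntervalIntegrable (fun s => (τ - s) ^ (α - 1) * φ s) volume 0 τ := by
        refine hK.mul_continuousOn ?_
        rw [uIcc_of_le hτ0]; exact hφcont.mono hIccτ
      have hIψ : IntervalIntegrable (fun s => (τ - s) ^ (α - 1) * ψ s) volume 0 τ :=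
        hK.mul_continuousOn hψcont.continuousOn
      have hmono : (∫ s in (0:ℝ)..τ, (τ - s) ^ (α - 1) * φ s)
          ≤ ∫ s in (0:ℝ)..τ, (τ - s) ^ (α - 1) * ψ s := by
        refine intervalIntegral.integral_mono_on hτ0 hIφ hIψ fun s hs => ?_
        exact mul_le_mul_of_nonneg_left (ih s (hIccτ hs)) (hKnn s hs)
      have hKk : ∀ k : ℕ, IntervalIntegrable
          (fun s => (τ - s) ^ (α - 1) * s ^ (α * k)) volume 0 τ := fun k =>
        hK.mul_continuousOn ((Real.continuous_rpow_const (by positivity)).continuousOn)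
      have hIk : ∀ k : ℕ, (∫ s in (0:ℝ)..τ, (τ - s) ^ (α - 1) * s ^ (α * k))
          = Real.Gamma α * Real.Gamma (α * k + 1) / Real.Gamma (α + α * k + 1)
            * τ ^ (α + α * k) := fun k => keyInt hα0 (by positivity) hτ0
      have hval : (∫ s in (0:ℝ)..τ, (τ - s) ^ (α - 1) * ψ s)
          = (∑ k ∈ Finset.range n, (M * (L ^ k / Real.Gamma (α * k + 1))) *
              (Real.Gamma α * Real.Gamma (α * k + 1) / Real.Gamma (α + α * k + 1)
                * τ ^ (α + α * k)))
            + (C * (L ^ n / Real.Gamma (α * n + 1))) *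
              (Real.Gamma α * Real.Gamma (α * n + 1) / Real.Gamma (α + α * n + 1)
                * τ ^ (α + α * n)) := by
        have hcongr : (∫ s in (0:ℝ)..τ, (τ - s) ^ (α - 1) * ψ s)
            = ∫ s in (0:ℝ)..τ,
              ((∑ k ∈ Finset.range n, (M * (L ^ k / Real.Gamma (α * k + 1))) *
                ((τ - s) ^ (α - 1) * s ^ (α * k)))
              + (C * (L ^ n / Real.Gamma (α * n + 1))) *
                ((τ - s) ^ (α - 1) * s ^ (α * n))) := by
          refine intervalIntegral.integral_congr fun s _ => ?_
          simp only [hψdef]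
          rw [mul_add, Finset.mul_sum]
          congr 1
          · rw [Finset.mul_sum]
            exact Finset.sum_congr rfl fun k _ => by ring
          · ring
        have hIsum : IntervalIntegrable (fun s => ∑ k ∈ Finset.range n,
            (M * (L ^ k / Real.Gamma (α * k + 1))) * ((τ - s) ^ (α - 1) * s ^ (α * k)))
            volume 0 τ := by
          have := IntervalIntegrable.sum (μ := volume) (a := (0:ℝ)) (b := τ)
            (Finset.range n)
            (f := fun k => fun s => (M * (L ^ k / Real.Gamma (α * k + 1))) *
              ((τ - s) ^ (α - 1) * s ^ (α * k)))
            (fun k _ => ((hKk k).const_mul _))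
          convert this using 1
          · rfl
          ext s
          simp [Finset.sum_apply]
        rw [hcongr, intervalIntegral.integral_add hIsum ((hKk n).const_mul _),
          intervalIntegral.integral_finset_sum (fun k _ => ((hKk k).const_mul _))]
        congr 1
        · exact Finset.sum_congr rfl fun k _ => by
            rw [intervalIntegral.integral_const_mul, hIk k]
        · rw [intervalIntegral.integral_const_mul, hIk n]
      have hΓk : ∀ k : ℕ, (0:ℝ) < Real.Gamma (α * k + 1) :=
        fun k => Real.Gamma_pos_of_pos (by positivity)
      have hfold : ∀ k : ℕ, (L / Real.Gamma α) *
          ((L ^ k / Real.Gamma (α * k + 1)) *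
            (Real.Gamma α * Real.Gamma (α * k + 1) / Real.Gamma (α + α * k + 1)
              * τ ^ (α + α * k)))
          = L ^ (k+1) * τ ^ (α * ((k:ℝ)+1)) / Real.Gamma (α * ((k:ℝ)+1) + 1) := by
        intro k
        have hcast : α * ((k:ℝ)+1) = α + α * k := by ring
        rw [hcast]
        field_simp
        ring
      calc φ τ ≤ M + (L / Real.Gamma α) * ∫ s in (0:ℝ)..τ, (τ - s) ^ (α - 1) * φ s :=
            step1 τ hτ
        _ ≤ M + (L / Real.Gamma α) * ∫ s in (0:ℝ)..τ, (τ - s) ^ (α - 1) * ψ s :=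
            add_le_add_right (mul_le_mul_of_nonneg_left hmono (by positivity)) M
        _ = M * (∑ k ∈ Finset.range (n+1), L ^ k * τ ^ (α * k) / Real.Gamma (α * k + 1))
            + C * (L ^ (n+1) * τ ^ (α * (n+1:ℕ)) / Real.Gamma (α * (n+1:ℕ) + 1)) := by
            rw [hval, mul_add, Finset.mul_sum]
            have hsum : ∀ k ∈ Finset.range n, (L / Real.Gamma α) *
                ((M * (L ^ k / Real.Gamma (α * k + 1))) *
                  (Real.Gamma α * Real.Gamma (α * k + 1) / Real.Gamma (α + α * k + 1)
                    * τ ^ (α + α * k)))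
                = M * (L ^ (k+1) * τ ^ (α * ((k:ℝ)+1)) / Real.Gamma (α * ((k:ℝ)+1) + 1)) := by
              intro k _
              rw [← hfold k]
              ring
            rw [Finset.sum_congr rfl hsum]
            rw [Finset.sum_range_succ' (fun k => L ^ k * τ ^ (α * (k:ℕ)) / Real.Gamma (α * (k:ℕ) + 1)) n]
            push_cast
            rw [show α * (0:ℝ) = 0 by ring, Real.rpow_zero, zero_add, Real.Gamma_one]
            rw [mul_add, Finset.mul_sum]
            have hX : (L / Real.Gamma α) * (C * (L ^ n / Real.Gamma (α * n + 1)) *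
                (Real.Gamma α * Real.Gamma (α * n + 1) / Real.Gamma (α + α * n + 1)
                  * τ ^ (α + α * n)))
                = C * (L ^ (n+1) * τ ^ (α * ((n:ℝ)+1)) / Real.Gamma (α * ((n:ℝ)+1) + 1)) := by
              rw [← hfold n]
              ring
            rw [hX]
            ring
  have hx0 : (0:ℝ) ≤ L * t ^ α := by positivity
  have hsummable := summable_mittag hα0 hx0
  have hterm : ∀ k : ℕ, L ^ k * t ^ (α * k) / Real.Gamma (α * k + 1)
      = (L * t ^ α) ^ k / Real.Gamma (α * k + 1) := by
    intro k
    rw [mul_pow, ← Real.rpow_natCast (t ^ α) k, ← Real.rpow_mul ht0]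
  have hpartial : ∀ n : ℕ, (∑ k ∈ Finset.range n, (L * t ^ α) ^ k / Real.Gamma (α * k + 1))
      ≤ mittagLeffler α (L * t ^ α) := fun n =>
    Summable.sum_le_tsum (Finset.range n) (fun k _ => by positivity) hsummable
  have hrem : Filter.Tendsto
      (fun n : ℕ => M * mittagLeffler α (L * t ^ α)
        + C * ((L * t ^ α) ^ n / Real.Gamma (α * n + 1)))
      Filter.atTop (nhds (M * mittagLeffler α (L * t ^ α))) := by
    have h0 := hsummable.tendsto_atTop_zero
    simpa using tendsto_const_nhds.add (h0.const_mul C)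
  refine ge_of_tendsto hrem (Filter.Eventually.of_forall fun n => ?_)
  have hm := main n t ⟨ht0, le_refl t⟩
  refine hm.trans (add_le_add ?_ ?_)
  · refine mul_le_mul_of_nonneg_left ?_ hMnn
    calc ∑ k ∈ Finset.range n, L ^ k * t ^ (α * k) / Real.Gamma (α * k + 1)
        = ∑ k ∈ Finset.range n, (L * t ^ α) ^ k / Real.Gamma (α * k + 1) :=
          Finset.sum_congr rfl fun k _ => hterm k
      _ ≤ mittagLeffler α (L * t ^ α) := hpartial n
  · rw [hterm n]
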